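/- Let k > 0 be a real number and let f₃, f₄, f₅, f₆, f₇, f₈, f₉, g be nonnegative real numbers satisfying f₃ + f₄ + f₅ + f₆ + f₇ + f₈ + f₉ + g = k and 3f₃ + 4f₄ + 5f₅ + 6f₆ + 7f₇ + 8f₈ + 9f₉ + 10g ≤ 6k. Then m₃f₃ + m₄f₄ + m₅f₅ + m₆f₆ + m₇f₇ + m₈f₈ + m₉f₉ + (π/4)g ≤ k·(m₅ + m₇)/2, where m₃ = √3/4, m₄ = 1/2, m₅ = (5/2)cos(π/5)tan(π/10), m₆ = 0.6749814429, m₇ = (7/2)cos(π/7)tan(π/14), m₈ = 0.7268684828, m₉ = (9/2)cos(π/9)tan(π/18). Moreover the maximum k·(m₅ + m₇)/2 ≈ 0.688452·k is attained at f₅ = f₇ = k/2 and all other variables zero. -/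

import Mathlib

private lemma cos_ge_aux {x b lo : ℝ} (h0 : 0 ≤ x) (hb : x ≤ b) (hb1 : b ≤ 1)
    (hlo : lo ≤ 1 - b ^ 2 / 2 - b ^ 4 * (5 / 96)) : lo ≤ Real.cos x := by
  have hx1 : |x| ≤ 1 := by rw [abs_of_nonneg h0]; linarith
  have h := Real.cos_bound hx1
  rw [abs_of_nonneg h0, abs_le] at h
  have h2 : x ^ 2 ≤ b ^ 2 := pow_le_pow_left₀ h0 hb 2
  have h4 : x ^ 4 ≤ b ^ 4 := pow_le_pow_left₀ h0 hb 4
  nlinarith [h.1]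

private lemma cos_le_aux {x a b hi : ℝ} (h0 : 0 ≤ a) (ha : a ≤ x) (hb : x ≤ b) (hb1 : b ≤ 1)
    (hhi : 1 - a ^ 2 / 2 + b ^ 4 * (5 / 96) ≤ hi) : Real.cos x ≤ hi := by
  have h0x : 0 ≤ x := le_trans h0 ha
  have hx1 : |x| ≤ 1 := by rw [abs_of_nonneg h0x]; linarith
  have h := Real.cos_bound hx1
  rw [abs_of_nonneg h0x, abs_le] at h
  have h2 : a ^ 2 ≤ x ^ 2 := pow_le_pow_left₀ h0 ha 2
  have h4 : x ^ 4 ≤ b ^ 4 := pow_le_pow_left₀ h0x hb 4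
  nlinarith [h.2]

private lemma sin_ge_aux {x a b lo : ℝ} (h0 : 0 ≤ a) (ha : a ≤ x) (hb : x ≤ b) (hb1 : b ≤ 1)
    (hlo : lo ≤ a - b ^ 3 / 6 - b ^ 4 * (5 / 96)) : lo ≤ Real.sin x := by
  have h0x : 0 ≤ x := le_trans h0 ha
  have hx1 : |x| ≤ 1 := by rw [abs_of_nonneg h0x]; linarith
  have h := Real.sin_bound hx1
  rw [abs_of_nonneg h0x, abs_le] at h
  have h3 : x ^ 3 ≤ b ^ 3 := pow_le_pow_left₀ h0x hb 3
  have h4 : x ^ 4 ≤ b ^ 4 := pow_le_pow_left₀ h0x hb 4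
  have h5 : x ^ 5 ≤ x ^ 4 := pow_le_pow_of_le_one h0x (by linarith) (by norm_num)
  nlinarith [h.1, h5]

private lemma sin_le_aux {x a b hi : ℝ} (h0 : 0 ≤ a) (ha : a ≤ x) (hb : x ≤ b) (hb1 : b ≤ 1)
    (hhi : b - a ^ 3 / 6 + b ^ 4 * (5 / 96) ≤ hi) : Real.sin x ≤ hi := by
  have h0x : 0 ≤ x := le_trans h0 ha
  have hx1 : |x| ≤ 1 := by rw [abs_of_nonneg h0x]; linarith
  have h := Real.sin_bound hx1
  rw [abs_of_nonneg h0x, abs_le] at h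
  have h3 : a ^ 3 ≤ x ^ 3 := pow_le_pow_left₀ h0 ha 3
  have h4 : x ^ 4 ≤ b ^ 4 := pow_le_pow_left₀ h0x hb 4
  have h5 : x ^ 5 ≤ x ^ 4 := pow_le_pow_of_le_one h0x (by linarith) (by norm_num)
  nlinarith [h.2, h5]

private lemma m5_bounds :
    (0.6441 : ℝ) ≤ 5 / 2 * Real.cos (Real.pi / 5) * Real.tan (Real.pi / 10) ∧
    5 / 2 * Real.cos (Real.pi / 5) * Real.tan (Real.pi / 10) ≤ (0.6603 : ℝ) := by
  have hπl := Real.pi_gt_d6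
  have hπu := Real.pi_lt_d6
  have hc5l : (0.7944904 : ℝ) ≤ Real.cos (Real.pi / 5) :=
    cos_ge_aux (b := 0.6283186) (by positivity) (by linarith) (by norm_num) (by norm_num)
  have hc5u : Real.cos (Real.pi / 5) ≤ (0.8107255 : ℝ) :=
    cos_le_aux (a := 0.6283184) (b := 0.6283186) (by norm_num) (by linarith) (by linarith)
      (by norm_num) (by norm_num)
  have hs10l : (0.3084841 : ℝ) ≤ Real.sin (Real.pi / 10) :=
    sin_ge_aux (a := 0.3141592) (b := 0.3141593) (by norm_num) (by linarith) (by linarith)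
      (by norm_num) (by norm_num)
  have hs10u : Real.sin (Real.pi / 10) ≤ (0.3094990 : ℝ) :=
    sin_le_aux (a := 0.3141592) (b := 0.3141593) (by norm_num) (by linarith) (by linarith)
      (by norm_num) (by norm_num)
  have hc10l : (0.9501446 : ℝ) ≤ Real.cos (Real.pi / 10) :=
    cos_ge_aux (b := 0.3141593) (by positivity) (by linarith) (by norm_num) (by norm_num)
  have hc10u : Real.cos (Real.pi / 10) ≤ (0.9511594 : ℝ) :=
    cos_le_aux (a := 0.3141592) (b := 0.3141593) (by norm_num) (by linarith) (by linarith)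
      (by norm_num) (by norm_num)
  have hc10pos : (0 : ℝ) < Real.cos (Real.pi / 10) := by linarith
  have ht : Real.tan (Real.pi / 10) = Real.sin (Real.pi / 10) / Real.cos (Real.pi / 10) :=
    Real.tan_eq_sin_div_cos _
  have heq : 5 / 2 * Real.cos (Real.pi / 5) * (Real.sin (Real.pi / 10) / Real.cos (Real.pi / 10))
      = 5 / 2 * Real.cos (Real.pi / 5) * Real.sin (Real.pi / 10) / Real.cos (Real.pi / 10) := by
    ring
  rw [ht, heq]
  constructor
  · rw [le_div_iff₀ hc10pos]
    nlinarith
  · rw [div_le_iff₀ hc10pos]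
    nlinarith

private lemma m7_bounds :
    (0.7162 : ℝ) ≤ 7 / 2 * Real.cos (Real.pi / 7) * Real.tan (Real.pi / 14) ∧
    7 / 2 * Real.cos (Real.pi / 7) * Real.tan (Real.pi / 14) ≤ (0.7208 : ℝ) := by
  have hπl := Real.pi_gt_d6
  have hπu := Real.pi_lt_d6
  have hc7l : (0.8971766 : ℝ) ≤ Real.cos (Real.pi / 7) :=
    cos_ge_aux (b := 0.4487990) (by positivity) (by linarith) (by norm_num) (by norm_num)
  have hc7u : Real.cos (Real.pi / 7) ≤ (0.9014029 : ℝ) :=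
    cos_le_aux (a := 0.4487988) (b := 0.4487990) (by norm_num) (by linarith) (by linarith)
      (by norm_num) (by norm_num)
  have hs14l : (0.2223840 : ℝ) ≤ Real.sin (Real.pi / 14) :=
    sin_ge_aux (a := 0.2243994) (b := 0.2243995) (by norm_num) (by linarith) (by linarith)
      (by norm_num) (by norm_num)
  have hs14u : Real.sin (Real.pi / 14) ≤ (0.2226483 : ℝ) :=
    sin_le_aux (a := 0.2243994) (b := 0.2243995) (by norm_num) (by linarith) (by linarith)
      (by norm_num) (by norm_num)
  have hc14l : (0.9746903 : ℝ) ≤ Real.cos (Real.pi / 14) :=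
    cos_ge_aux (b := 0.2243995) (by positivity) (by linarith) (by norm_num) (by norm_num)
  have hc14u : Real.cos (Real.pi / 14) ≤ (0.9749546 : ℝ) :=
    cos_le_aux (a := 0.2243994) (b := 0.2243995) (by norm_num) (by linarith) (by linarith)
      (by norm_num) (by norm_num)
  have hc14pos : (0 : ℝ) < Real.cos (Real.pi / 14) := by linarith
  have ht : Real.tan (Real.pi / 14) = Real.sin (Real.pi / 14) / Real.cos (Real.pi / 14) :=
    Real.tan_eq_sin_div_cos _
  have heq : 7 / 2 * Real.cos (Real.pi / 7) * (Real.sin (Real.pi / 14) / Real.cos (Real.pi / 14))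
      = 7 / 2 * Real.cos (Real.pi / 7) * Real.sin (Real.pi / 14) / Real.cos (Real.pi / 14) := by
    ring
  rw [ht, heq]
  constructor
  · rw [le_div_iff₀ hc14pos]
    nlinarith
  · rw [div_le_iff₀ hc14pos]
    nlinarith

private lemma m9_bound :
    9 / 2 * Real.cos (Real.pi / 9) * Real.tan (Real.pi / 18) ≤ (0.7461 : ℝ) := by
  have hπl := Real.pi_gt_d6
  have hπu := Real.pi_lt_d6
  have hc9l : (0.9383032 : ℝ) ≤ Real.cos (Real.pi / 9) :=
    cos_ge_aux (b := 0.3490659) (by positivity) (by linarith) (by norm_num) (by norm_num)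
  have hc9u : Real.cos (Real.pi / 9) ≤ (0.9398499 : ℝ) :=
    cos_le_aux (a := 0.3490657) (b := 0.3490659) (by norm_num) (by linarith) (by linarith)
      (by norm_num) (by norm_num)
  have hs18u : Real.sin (Real.pi / 18) ≤ (0.1736960 : ℝ) :=
    sin_le_aux (a := 0.1745328) (b := 0.1745330) (by norm_num) (by linarith) (by linarith)
      (by norm_num) (by norm_num)
  have hc18l : (0.9847207 : ℝ) ≤ Real.cos (Real.pi / 18) :=
    cos_ge_aux (b := 0.1745330) (by positivity) (by linarith) (by norm_num) (by norm_num)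
  have hc18pos : (0 : ℝ) < Real.cos (Real.pi / 18) := by linarith
  have ht : Real.tan (Real.pi / 18) = Real.sin (Real.pi / 18) / Real.cos (Real.pi / 18) :=
    Real.tan_eq_sin_div_cos _
  have heq : 9 / 2 * Real.cos (Real.pi / 9) * (Real.sin (Real.pi / 18) / Real.cos (Real.pi / 18))
      = 9 / 2 * Real.cos (Real.pi / 9) * Real.sin (Real.pi / 18) / Real.cos (Real.pi / 18) := by
    ring
  rw [ht, heq, div_le_iff₀ hc18pos]
  nlinarith

/-- The linear programming step: if `f₃, …, f₉, g ≥ 0` satisfy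
`f₃ + ⋯ + f₉ + g = k` and `3f₃ + 4f₄ + ⋯ + 9f₉ + 10g ≤ 6k`, then
`m₃f₃ + ⋯ + m₉f₉ + (π/4)g ≤ k·(m₅ + m₇)/2`, where the `m_j` are the maximal areas of
convex polygons with `j` edges and diameter `1`.  The maximum is attained at
`f₅ = f₇ = k/2` and all other variables zero. -/
theorem lp_step (k f3 f4 f5 f6 f7 f8 f9 g : ℝ) (hk : 0 < k)
    (h3 : 0 ≤ f3) (h4 : 0 ≤ f4) (h5 : 0 ≤ f5) (h6 : 0 ≤ f6) (h7 : 0 ≤ f7)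
    (h8 : 0 ≤ f8) (h9 : 0 ≤ f9) (hg : 0 ≤ g)
    (hsum : f3 + f4 + f5 + f6 + f7 + f8 + f9 + g = k)
    (hedges : 3 * f3 + 4 * f4 + 5 * f5 + 6 * f6 + 7 * f7 + 8 * f8 + 9 * f9 + 10 * g ≤ 6 * k) :
    (Real.sqrt 3 / 4) * f3 + (1 / 2) * f4 +
      (5 / 2 * Real.cos (Real.pi / 5) * Real.tan (Real.pi / 10)) * f5 +
      0.6749814429 * f6 +
      (7 / 2 * Real.cos (Real.pi / 7) * Real.tan (Real.pi / 14)) * f7 +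
      0.7268684828 * f8 +
      (9 / 2 * Real.cos (Real.pi / 9) * Real.tan (Real.pi / 18)) * f9 +
      (Real.pi / 4) * g ≤
    k * ((5 / 2 * Real.cos (Real.pi / 5) * Real.tan (Real.pi / 10)) +
      (7 / 2 * Real.cos (Real.pi / 7) * Real.tan (Real.pi / 14))) / 2 ∧
    (5 / 2 * Real.cos (Real.pi / 5) * Real.tan (Real.pi / 10)) * (k / 2) +
      (7 / 2 * Real.cos (Real.pi / 7) * Real.tan (Real.pi / 14)) * (k / 2) =
    k * ((5 / 2 * Real.cos (Real.pi / 5) * Real.tan (Real.pi / 10)) +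
      (7 / 2 * Real.cos (Real.pi / 7) * Real.tan (Real.pi / 14))) / 2 := by
  set m5 := 5 / 2 * Real.cos (Real.pi / 5) * Real.tan (Real.pi / 10) with hm5def
  set m7 := 7 / 2 * Real.cos (Real.pi / 7) * Real.tan (Real.pi / 14) with hm7def
  set m9 := 9 / 2 * Real.cos (Real.pi / 9) * Real.tan (Real.pi / 18) with hm9def
  obtain ⟨hm5l, hm5u⟩ := m5_bounds
  obtain ⟨hm7l, hm7u⟩ := m7_bounds
  have hm9u := m9_bound
  have hπu := Real.pi_lt_d6
  have hs3 : Real.sqrt 3 ≤ 1.7321 := by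
    nlinarith [Real.sq_sqrt (by norm_num : (0:ℝ) ≤ 3), Real.sqrt_nonneg 3]
  refine ⟨?_, by ring⟩
  -- dual certificate: coefficient of f_j is bounded by a + b·j with
  -- a = (7m5 - 5m7)/2, b = (m7 - m5)/2 ≥ 0
  have hb : (0 : ℝ) ≤ (m7 - m5) / 2 := by linarith
  have hm3 : Real.sqrt 3 / 4 ≤ 2 * m5 - m7 := by linarith
  have hm4 : (1 : ℝ) / 2 ≤ (3 * m5 - m7) / 2 := by linarith
  have hm6 : (0.6749814429 : ℝ) ≤ (m5 + m7) / 2 := by linarith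
  have hm8 : (0.7268684828 : ℝ) ≤ (3 * m7 - m5) / 2 := by linarith
  have hm9' : m9 ≤ 2 * m7 - m5 := by linarith
  have hmg : Real.pi / 4 ≤ (5 * m7 - 3 * m5) / 2 := by linarith
  have p3 := mul_le_mul_of_nonneg_right hm3 h3
  have p4 := mul_le_mul_of_nonneg_right hm4 h4
  have p6 := mul_le_mul_of_nonneg_right hm6 h6
  have p8 := mul_le_mul_of_nonneg_right hm8 h8
  have p9 := mul_le_mul_of_nonneg_right hm9' h9
  have pg := mul_le_mul_of_nonneg_right hmg hg
  have pe := mul_le_mul_of_nonneg_left hedges hb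
  have ps : ((7 * m5 - 5 * m7) / 2) * (f3 + f4 + f5 + f6 + f7 + f8 + f9 + g)
      = ((7 * m5 - 5 * m7) / 2) * k := by rw [hsum]
  linarith [p3, p4, p6, p8, p9, pg, pe, ps]
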